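/- arXiv:2310.20606 — 2 statements merged into one kernel-verified Lean document; each statement's English description precedes it below -/
import Mathlib

section
/- For all M ≥ m and all a ≤ 2^m, the outer vertex boundary of the Hales-order initial segment of size a in the M-dimensional cube is at least that in the m-dimensional cube: |Γ' I_a^m| ≤ |Γ' I_a^M|. -/
/-- Hales (simplicial) order on the Boolean cube: smaller Hamming weight first;
for equal weights, `x` precedes `y` if the smallest coordinate where they differ is `1` in `x`. -/
def halesLT {m : ℕ} (x y : Fin m → ZMod 2) : Prop :=
  hammingNorm x < hammingNorm y ∨
    (hammingNorm x = hammingNorm y ∧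
      ∃ i : Fin m, x i ≠ y i ∧ x i = 1 ∧ ∀ j : Fin m, j < i → x j = y j)

/-- The set of the first `a` elements of the Boolean cube `{0,1}^m` in Hales order. -/
def halesInit (m a : ℕ) : Set (Fin m → ZMod 2) :=
  {x | Nat.card {y : Fin m → ZMod 2 | halesLT y x} < a}

/-- The outer vertex boundary of a set in the Boolean cube graph. -/
def outerBoundary {m : ℕ} (A : Set (Fin m → ZMod 2)) : Set (Fin m → ZMod 2) :=
  {v | v ∉ A ∧ ∃ u ∈ A, hammingDist u v = 1}

namespace HarperAux

open Finset

abbrev V (n : ℕ) := Fin n → ZMod 2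

lemma z2cases (a : ZMod 2) : a = 0 ∨ a = 1 := by revert a; decide

lemma z2ne {a b : ZMod 2} (h : a ≠ b) : b = a + 1 := by revert h; revert b; revert a; decide

lemma z2ne10 {a b : ZMod 2} (h : a ≠ b) (h1 : a = 1) : b = 0 := by
  subst h1; rcases z2cases b with hb | hb <;> simp_all

lemma z2ne01 {a b : ZMod 2} (h : a ≠ b) (h1 : a = 0) : b = 1 := by
  subst h1; rcases z2cases b with hb | hb <;> simp_all

instance {n : ℕ} (x y : V n) : Decidable (halesLT x y) := by
  unfold halesLT; infer_instance

/-- Hamming weight. -/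
def wt {n : ℕ} (x : V n) : ℕ := hammingNorm x

lemma hlt_of_wt_lt {n : ℕ} {x y : V n} (h : wt x < wt y) : halesLT x y := Or.inl h

lemma wt_le_of_hlt {n : ℕ} {x y : V n} (h : halesLT x y) : wt x ≤ wt y := by
  rcases h with h | ⟨h, _⟩
  · exact le_of_lt h
  · exact le_of_eq h

lemma hlt_irrefl {n : ℕ} (x : V n) : ¬ halesLT x x := by
  rintro (h | ⟨-, i, hne, -, -⟩)
  · exact lt_irrefl _ h
  · exact hne rfl

lemma hlt_trans {n : ℕ} {x y z : V n} (h1 : halesLT x y) (h2 : halesLT y z) :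
    halesLT x z := by
  rcases h1 with h1 | ⟨e1, i1, hne1, hx1, hb1⟩
  · rcases h2 with h2 | ⟨e2, _⟩
    · exact Or.inl (h1.trans h2)
    · exact Or.inl (e2 ▸ h1)
  · rcases h2 with h2 | ⟨e2, i2, hne2, hy2, hb2⟩
    · exact Or.inl (e1 ▸ h2)
    · refine Or.inr ⟨e1.trans e2, ?_⟩
      rcases lt_trichotomy i1 i2 with hc | hc | hc
      · -- i1 < i2 : use i1
        refine ⟨i1, ?_, hx1, ?_⟩
        · rw [← hb2 i1 hc]
          exact hne1
        · intro j hj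
          rw [hb1 j hj, hb2 j (hj.trans hc)]
      · -- i1 = i2 : contradiction
        exfalso
        subst hc
        have h0 : y i1 = 0 := z2ne10 hne1 hx1
        rw [h0] at hy2
        exact one_ne_zero hy2.symm
      · -- i2 < i1 : use i2
        refine ⟨i2, ?_, ?_, ?_⟩
        · rw [hb1 i2 hc]; exact hne2
        · rw [hb1 i2 hc]; exact hy2
        · intro j hj
          rw [hb1 j (hj.trans hc), hb2 j hj]

lemma hlt_trichotomy {n : ℕ} (x y : V n) : halesLT x y ∨ x = y ∨ halesLT y x := by
  rcases lt_trichotomy (wt x) (wt y) with h | h | h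
  · exact Or.inl (Or.inl h)
  · by_cases hxy : x = y
    · exact Or.inr (Or.inl hxy)
    · -- equal weight, different: find least differing coordinate
      have hne : (Finset.univ.filter (fun i => x i ≠ y i)).Nonempty := by
        by_contra hcon
        apply hxy
        funext i
        by_contra hxi
        exact hcon ⟨i, by simp [hxi]⟩
      set i := (Finset.univ.filter (fun i => x i ≠ y i)).min' hne with hi
      have himem : x i ≠ y i := by
        have := Finset.min'_mem _ hne
        simpa using this
      have hbelow : ∀ j : Fin n, j < i → x j = y j := by
        intro j hj
        by_contra hcon
        have : i ≤ j := Finset.min'_le _ _ (by simpa using hcon)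
        exact absurd hj (not_lt.mpr this)
      rcases z2cases (x i) with hxi | hxi
      · refine Or.inr (Or.inr (Or.inr ⟨h.symm, i, (Ne.symm himem), z2ne01 himem hxi, ?_⟩))
        intro j hj; exact (hbelow j hj).symm
      · exact Or.inl (Or.inr ⟨h, i, himem, hxi, hbelow⟩)
  · exact Or.inr (Or.inr (Or.inl h))

lemma hlt_asymm {n : ℕ} {x y : V n} (h : halesLT x y) : ¬ halesLT y x :=
  fun h2 => hlt_irrefl x (hlt_trans h h2)

/-- Rank in the Hales order. -/
def rk {n : ℕ} (x : V n) : ℕ := (Finset.univ.filter (fun y => halesLT y x)).card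

lemma rk_lt_rk {n : ℕ} {x y : V n} (h : halesLT x y) : rk x < rk y := by
  apply Finset.card_lt_card
  constructor
  · intro z hz
    simp only [Finset.mem_filter, Finset.mem_univ, true_and] at hz ⊢
    exact hlt_trans hz h
  · intro hcon
    have : x ∈ Finset.univ.filter (fun y_1 => halesLT y_1 y) := by
      simp [h]
    have := hcon this
    simp only [Finset.mem_filter, Finset.mem_univ, true_and] at this
    exact hlt_irrefl x this

lemma hlt_of_rk_lt {n : ℕ} {x y : V n} (h : rk x < rk y) : halesLT x y := by
  rcases hlt_trichotomy x y with h1 | h1 | h1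
  · exact h1
  · subst h1; exact absurd h (lt_irrefl _)
  · exact absurd h (not_lt.mpr (le_of_lt (rk_lt_rk h1)))

lemma rk_inj {n : ℕ} : Function.Injective (rk : V n → ℕ) := by
  intro x y h
  rcases hlt_trichotomy x y with h1 | h1 | h1
  · exact absurd h (ne_of_lt (rk_lt_rk h1))
  · exact h1
  · exact absurd h.symm (ne_of_lt (rk_lt_rk h1))

lemma card_V (n : ℕ) : Fintype.card (V n) = 2 ^ n := by
  simp [Fintype.card_fun]

lemma rk_lt_pow {n : ℕ} (x : V n) : rk x < 2 ^ n := by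
  have h1 : (Finset.univ.filter (fun y => halesLT y x)) ⊆ Finset.univ.erase x := by
    intro z hz
    simp only [Finset.mem_filter, Finset.mem_univ, true_and] at hz
    apply Finset.mem_erase.mpr
    refine ⟨?_, Finset.mem_univ z⟩
    rintro rfl
    exact hlt_irrefl _ hz
  calc rk x ≤ (Finset.univ.erase x).card := Finset.card_le_card h1
    _ < Finset.univ.card := Finset.card_erase_lt_of_mem (Finset.mem_univ x)
    _ = 2 ^ n := by rw [Finset.card_univ, card_V]

lemma rk_image_eq (n : ℕ) :
    Finset.univ.image (rk : V n → ℕ) = Finset.range (2 ^ n) := by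
  apply Finset.eq_of_subset_of_card_le
  · intro k hk
    simp only [Finset.mem_image, Finset.mem_univ, true_and] at hk
    obtain ⟨x, rfl⟩ := hk
    exact Finset.mem_range.mpr (rk_lt_pow x)
  · rw [Finset.card_range, Finset.card_image_of_injective _ rk_inj, Finset.card_univ, card_V]

lemma rk_surj {n : ℕ} {k : ℕ} (h : k < 2 ^ n) : ∃ x : V n, rk x = k := by
  have : k ∈ Finset.univ.image (rk : V n → ℕ) := by
    rw [rk_image_eq]; exact Finset.mem_range.mpr h
  simpa using this

/-- The element of rank `k`. -/
noncomputable def elt (n k : ℕ) : V n :=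
  if h : k < 2 ^ n then (rk_surj h).choose else fun _ => 0

lemma rk_elt {n k : ℕ} (h : k < 2 ^ n) : rk (elt n k) = k := by
  rw [elt, dif_pos h]
  exact (rk_surj h).choose_spec

/-- Initial segment of size `t` (as a finset). -/
def seg (n t : ℕ) : Finset (V n) := Finset.univ.filter (fun x => rk x < t)

lemma mem_seg {n t : ℕ} {x : V n} : x ∈ seg n t ↔ rk x < t := by simp [seg]

lemma seg_mono {n : ℕ} {s t : ℕ} (h : s ≤ t) : seg n s ⊆ seg n t := by
  intro x hx; rw [mem_seg] at *; omega

lemma seg_down {n t : ℕ} {x y : V n} (h : halesLT y x) (hx : x ∈ seg n t) :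
    y ∈ seg n t := by
  rw [mem_seg] at *
  exact (rk_lt_rk h).trans hx

lemma card_seg (n t : ℕ) : (seg n t).card = min t (2 ^ n) := by
  have h2 : (seg n t).image rk = (Finset.univ.image (rk : V n → ℕ)).filter (fun k => k < t) := by
    rw [seg, Finset.filter_image]
  have h1 : (seg n t).card = ((Finset.univ.image (rk : V n → ℕ)).filter (fun k => k < t)).card := by
    rw [← h2, Finset.card_image_of_injective _ rk_inj]
  rw [h1, rk_image_eq]
  have : (Finset.range (2 ^ n)).filter (fun k => k < t) = Finset.range (min t (2 ^ n)) := by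
    ext k; simp [Finset.mem_range, Finset.mem_filter]; omega
  rw [this, Finset.card_range]

lemma card_seg_of_le {n t : ℕ} (h : t ≤ 2 ^ n) : (seg n t).card = t := by
  rw [card_seg]; omega

/-- A down-closed finset is an initial segment. -/
def DownClosed {n : ℕ} (D : Finset (V n)) : Prop :=
  ∀ x ∈ D, ∀ y : V n, halesLT y x → y ∈ D

lemma seg_downClosed (n t : ℕ) : DownClosed (seg n t) :=
  fun _ hx _ h => seg_down h hx

lemma downClosed_eq_seg {n : ℕ} {D : Finset (V n)} (h : DownClosed D) :
    D = seg n D.card := by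
  -- rank image of D is down-closed in ℕ hence a range
  have key : ∀ x ∈ D, ∀ k, k < rk x → ∃ y ∈ D, rk y = k := by
    intro x hx k hk
    obtain ⟨y, hy⟩ := rk_surj (hk.trans (rk_lt_pow x))
    refine ⟨y, h x hx y (hlt_of_rk_lt (hy ▸ hk)), hy⟩
  have himg : D.image rk = Finset.range D.card := by
    apply Finset.eq_of_subset_of_card_le
    · -- down closed subset of ℕ: show each element < card
      intro k hk
      simp only [Finset.mem_image] at hk
      obtain ⟨x, hx, rfl⟩ := hk
      rw [Finset.mem_range]
      by_contra hcon
      push_neg at hcon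
      -- D contains elements of every rank ≤ rk x, that's rk x + 1 > card D many
      have hsub : Finset.range (rk x + 1) ⊆ D.image rk := by
        intro k hk
        rw [Finset.mem_range] at hk
        rcases Nat.lt_or_ge k (rk x) with hlt | hge
        · obtain ⟨y, hy, hyk⟩ := key x hx k hlt
          exact Finset.mem_image.mpr ⟨y, hy, hyk⟩
        · have : k = rk x := by omega
          exact Finset.mem_image.mpr ⟨x, hx, this.symm⟩
      have := Finset.card_le_card hsub
      rw [Finset.card_range, Finset.card_image_of_injective _ rk_inj] at this
      omega
    · rw [Finset.card_range, Finset.card_image_of_injective _ rk_inj]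
  ext x
  rw [mem_seg]
  constructor
  · intro hx
    have : rk x ∈ D.image rk := Finset.mem_image.mpr ⟨x, hx, rfl⟩
    rw [himg, Finset.mem_range] at this
    exact this
  · intro hx
    have : rk x ∈ Finset.range D.card := Finset.mem_range.mpr hx
    rw [← himg] at this
    obtain ⟨y, hy, hyx⟩ := Finset.mem_image.mp this
    rwa [rk_inj hyx] at hy

/-! ### Adjacency, support, neighbourhoods -/

/-- Support of a vector. -/
def supp {n : ℕ} (x : V n) : Finset (Fin n) := Finset.univ.filter (fun i => x i = 1)

lemma mem_supp {n : ℕ} {x : V n} {i : Fin n} : i ∈ supp x ↔ x i = 1 := by simp [supp]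

lemma wt_eq_card_supp {n : ℕ} (x : V n) : wt x = (supp x).card := by
  unfold wt hammingNorm supp
  congr 1
  ext i
  simp only [Finset.mem_filter, Finset.mem_univ, true_and]
  constructor
  · intro h; rcases z2cases (x i) with h1 | h1 <;> simp_all
  · intro h; rw [h]; exact one_ne_zero

lemma wt_le {n : ℕ} (x : V n) : wt x ≤ n := by
  rw [wt_eq_card_supp]
  calc (supp x).card ≤ Finset.univ.card := Finset.card_le_card (Finset.subset_univ _)
    _ = n := Finset.card_univ.trans (Fintype.card_fin n)

lemma wt_zero_iff {n : ℕ} (x : V n) : wt x = 0 ↔ x = fun _ => 0 := by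
  constructor
  · intro h
    funext i
    by_contra hi
    have : i ∈ ({i | x i ≠ 0} : Finset (Fin n)) := by simpa using hi
    have := Finset.card_pos.mpr ⟨i, this⟩
    unfold wt hammingNorm at h
    omega
  · intro h; subst h; unfold wt hammingNorm; simp

/-- Flip coordinate `i`. -/
def flip {n : ℕ} (i : Fin n) (x : V n) : V n := Function.update x i (x i + 1)

lemma flip_same {n : ℕ} (i : Fin n) (x : V n) : flip i x i = x i + 1 :=
  Function.update_self i _ x

lemma flip_ne_apply {n : ℕ} {i j : Fin n} (x : V n) (h : j ≠ i) : flip i x j = x j :=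
  Function.update_of_ne h _ x

lemma flip_ne {n : ℕ} (i : Fin n) (x : V n) : flip i x ≠ x := by
  intro h
  have := congrFun h i
  rw [flip_same] at this
  rcases z2cases (x i) with h1 | h1 <;> rw [h1] at this <;> exact absurd this (by decide)

lemma dist_flip {n : ℕ} (i : Fin n) (x : V n) : hammingDist x (flip i x) = 1 := by
  unfold hammingDist
  have : ({j | x j ≠ flip i x j} : Finset (Fin n)) = {i} := by
    ext j
    simp only [Finset.mem_filter, Finset.mem_univ, true_and, Finset.mem_singleton]
    constructor
    · intro h
      by_contra hj
      exact h (flip_ne_apply x hj).symm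
    · rintro rfl
      rw [flip_same]
      rcases z2cases (x j) with h1 | h1 <;> rw [h1] <;> decide
  rw [this, Finset.card_singleton]

lemma eq_flip_of_dist_one {n : ℕ} {u x : V n} (h : hammingDist u x = 1) :
    ∃ i, u = flip i x := by
  unfold hammingDist at h
  obtain ⟨i, hi⟩ := Finset.card_eq_one.mp h
  refine ⟨i, funext fun j => ?_⟩
  by_cases hj : j = i
  · subst hj
    have : u j ≠ x j := by
      have : j ∈ ({k | u k ≠ x k} : Finset (Fin n)) := by rw [hi]; exact Finset.mem_singleton_self j
      simpa using this
    rw [flip_same]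
    exact z2ne (Ne.symm this)
  · rw [flip_ne_apply x hj]
    by_contra hne
    have : j ∈ ({k | u k ≠ x k} : Finset (Fin n)) := by simpa using hne
    rw [hi, Finset.mem_singleton] at this
    exact hj this

lemma supp_flip_one {n : ℕ} {i : Fin n} {x : V n} (h : x i = 1) :
    supp (flip i x) = (supp x).erase i := by
  ext j
  rw [mem_supp, Finset.mem_erase, mem_supp]
  by_cases hj : j = i
  · subst hj
    rw [flip_same, h]
    simp
  · rw [flip_ne_apply x hj]
    simp [hj]

lemma supp_flip_zero {n : ℕ} {i : Fin n} {x : V n} (h : x i = 0) :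
    supp (flip i x) = insert i (supp x) := by
  ext j
  rw [mem_supp, Finset.mem_insert, mem_supp]
  by_cases hj : j = i
  · subst hj
    rw [flip_same, h]
    simp
  · rw [flip_ne_apply x hj]
    simp [hj]

lemma wt_flip_one {n : ℕ} {i : Fin n} {x : V n} (h : x i = 1) :
    wt (flip i x) + 1 = wt x := by
  rw [wt_eq_card_supp, wt_eq_card_supp, supp_flip_one h]
  have : i ∈ supp x := mem_supp.mpr h
  rw [Finset.card_erase_of_mem this]
  have : 0 < (supp x).card := Finset.card_pos.mpr ⟨i, this⟩
  omega

lemma wt_flip_zero {n : ℕ} {i : Fin n} {x : V n} (h : x i = 0) :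
    wt (flip i x) = wt x + 1 := by
  rw [wt_eq_card_supp, wt_eq_card_supp, supp_flip_zero h]
  have : i ∉ supp x := by rw [mem_supp, h]; decide
  rw [Finset.card_insert_of_notMem this]

/-- Closed neighbourhood of a finset. -/
def nb {n : ℕ} (A : Finset (V n)) : Finset (V n) :=
  A ∪ Finset.univ.filter (fun x => ∃ u ∈ A, hammingDist u x = 1)

lemma mem_nb {n : ℕ} {A : Finset (V n)} {x : V n} :
    x ∈ nb A ↔ x ∈ A ∨ ∃ u ∈ A, hammingDist u x = 1 := by
  simp [nb]

lemma subset_nb {n : ℕ} (A : Finset (V n)) : A ⊆ nb A := Finset.subset_union_left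

lemma nb_subset_nb {n : ℕ} {A B : Finset (V n)} (h : A ⊆ B) : nb A ⊆ nb B := by
  intro x hx
  rw [mem_nb] at *
  rcases hx with hx | ⟨u, hu, hd⟩
  · exact Or.inl (h hx)
  · exact Or.inr ⟨u, h hu, hd⟩

lemma nb_union_subset {n : ℕ} (A B : Finset (V n)) : nb (A ∪ B) ⊆ nb A ∪ nb B := by
  intro x hx
  rw [mem_nb] at hx
  rw [Finset.mem_union, mem_nb, mem_nb]
  rcases hx with hx | ⟨u, hu, hd⟩
  · rcases Finset.mem_union.mp hx with h | h
    · exact Or.inl (Or.inl h)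
    · exact Or.inr (Or.inl h)
  · rcases Finset.mem_union.mp hu with h | h
    · exact Or.inl (Or.inr ⟨u, h, hd⟩)
    · exact Or.inr (Or.inr ⟨u, h, hd⟩)

/-- The Harper function: size of the closed neighbourhood of the initial segment. -/
def g (n t : ℕ) : ℕ := (nb (seg n t)).card

lemma le_g {n t : ℕ} (h : t ≤ 2 ^ n) : t ≤ g n t := by
  have := Finset.card_le_card (subset_nb (seg n t))
  rw [card_seg_of_le h] at this
  exact this

lemma g_le_pow (n t : ℕ) : g n t ≤ 2 ^ n := by
  unfold g
  calc (nb (seg n t)).card ≤ Finset.univ.card := Finset.card_le_card (Finset.subset_univ _)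
    _ = 2 ^ n := Finset.card_univ.trans (card_V n)

/-- A lower neighbour of a vector outside a down-closed set. -/
lemma lower_nbr {n : ℕ} {A : Finset (V n)} (hA : DownClosed A) {x u : V n}
    (hu : u ∈ A) (hx : x ∉ A) (hd : hammingDist u x = 1) :
    ∃ i, x i = 1 ∧ u = flip i x ∧ wt u + 1 = wt x := by
  obtain ⟨i, rfl⟩ := eq_flip_of_dist_one hd
  have hne : flip i x ≠ x := flip_ne i x
  have hlt : halesLT (flip i x) x := by
    rcases hlt_trichotomy (flip i x) x with h | h | h
    · exact h
    · exact absurd h hne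
    · exact absurd (hA _ hu _ h) hx
  have hwle := wt_le_of_hlt hlt
  rcases z2cases (x i) with h1 | h1
  · exfalso
    have := wt_flip_zero h1
    omega
  · exact ⟨i, h1, rfl, wt_flip_one h1⟩


/-! ### The shadow lemma and initiality of the neighbourhood of an initial segment -/

lemma hlt_wt_zero {n : ℕ} {z y : V n} (h : wt y = 0) : ¬ halesLT z y := by
  unfold wt at h
  rintro (hlt | ⟨he, i, hne, hz1, -⟩)
  · omega
  · have h1 : i ∈ supp z := mem_supp.mpr hz1
    have h2 : 0 < (supp z).card := Finset.card_pos.mpr ⟨i, h1⟩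
    rw [← wt_eq_card_supp] at h2
    unfold wt at h2
    omega

lemma rk_wt_zero {n : ℕ} {y : V n} (h : wt y = 0) : rk y = 0 := by
  unfold rk
  rw [Finset.card_eq_zero]
  ext z
  simp only [Finset.mem_filter, Finset.mem_univ, true_and, Finset.notMem_empty, iff_false]
  exact hlt_wt_zero h

lemma supp_nonempty_of_wt {n : ℕ} {y : V n} (h : wt y ≠ 0) : (supp y).Nonempty := by
  rw [wt_eq_card_supp] at h
  exact Finset.card_pos.mp (by omega)

/-- Key lemma: removing the largest support element of `y ≤ x` (same weight) gives something
at most `x` minus any support element. -/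
lemma shadow_min_le {n : ℕ} {x y : V n} (hw : wt y = wt x) (hlt : halesLT y x)
    {i : Fin n} (hi : x i = 1) (hsy : (supp y).Nonempty) :
    flip ((supp y).max' hsy) y = flip i x ∨ halesLT (flip ((supp y).max' hsy) y) (flip i x) := by
  rcases hlt with hltw | ⟨-, p, hne, hyp, hagree⟩
  · unfold wt at hw; omega
  set j' := (supp y).max' hsy with hj'
  have hyj' : y j' = 1 := mem_supp.mp ((supp y).max'_mem hsy)
  have hxp : x p = 0 := z2ne10 hne hyp
  have hpj' : p ≤ j' := Finset.le_max' _ p (mem_supp.mpr hyp)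
  have hip : ¬ i < p → p < i := by
    intro h
    rcases lt_or_eq_of_le (not_lt.mp h) with h1 | h1
    · exact h1
    · exfalso; rw [h1] at hxp; rw [hxp] at hi; exact absurd hi (by decide)
  have hwA : wt (flip j' y) + 1 = wt y := wt_flip_one hyj'
  have hwB : wt (flip i x) + 1 = wt x := wt_flip_one hi
  have hwAB : wt (flip j' y) = wt (flip i x) := by omega
  by_cases hcase : i < p
  · -- use witness i
    right
    refine Or.inr ⟨hwAB, i, ?_, ?_, ?_⟩
    · have h1 : flip j' y i = y i := flip_ne_apply y (by omega : i ≠ j')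
      have h2 : flip i x i = x i + 1 := flip_same i x
      rw [h1, h2, hagree i hcase, hi]
      decide
    · have h1 : flip j' y i = y i := flip_ne_apply y (by omega : i ≠ j')
      rw [h1, hagree i hcase, hi]
    · intro j hj
      have h1 : flip j' y j = y j := flip_ne_apply y (by omega : j ≠ j')
      have h2 : flip i x j = x j := flip_ne_apply x (by omega : j ≠ i)
      rw [h1, h2, hagree j (hj.trans hcase)]
  · have hpi : p < i := hip hcase
    by_cases hcase2 : j' = p
    · -- A = B
      left
      -- x has exactly one support element > p (namely i), y none
      have hTle : ∀ j ∈ supp y, j ≤ p := by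
        intro j hj
        have := Finset.le_max' _ j hj
        omega
      have h1 : (supp x).filter (fun k => k < p) = (supp y).erase p := by
        ext j
        simp only [Finset.mem_filter, Finset.mem_erase, mem_supp]
        constructor
        · rintro ⟨hj1, hj2⟩
          exact ⟨by omega, by rw [hagree j hj2]; exact hj1⟩
        · rintro ⟨hj1, hj2⟩
          have hj3 : j ≤ p := hTle j (mem_supp.mpr hj2)
          have hj4 : j < p := lt_of_le_of_ne hj3 hj1
          exact ⟨by rw [← hagree j hj4]; exact hj2, hj4⟩
      have hcard : ((supp x).filter (fun k => ¬ k < p)).card = 1 := by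
        have hsplit := Finset.card_filter_add_card_filter_not
          (s := supp x) (p := fun k => k < p)
        rw [h1, Finset.card_erase_of_mem (mem_supp.mpr hyp)] at hsplit
        rw [← wt_eq_card_supp, ← wt_eq_card_supp] at hsplit
        have hy0 : 0 < wt y := by
          rw [wt_eq_card_supp]
          exact Finset.card_pos.mpr ⟨p, mem_supp.mpr hyp⟩
        omega
      have hfilt : (supp x).filter (fun k => ¬ k < p) = {i} := by
        obtain ⟨a, ha⟩ := Finset.card_eq_one.mp hcard
        have hi' : i ∈ (supp x).filter (fun k => ¬ k < p) := by
          simp only [Finset.mem_filter, mem_supp]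
          exact ⟨hi, by omega⟩
        rw [ha] at hi' ⊢
        rw [Finset.mem_singleton] at hi'
        rw [hi']
      have hxk : ∀ k, ¬ k < p → k ≠ i → x k = 0 := by
        intro k hk1 hk2
        rcases z2cases (x k) with h | h
        · exact h
        · exfalso
          have : k ∈ (supp x).filter (fun kk => ¬ kk < p) := by
            simp only [Finset.mem_filter, mem_supp]
            exact ⟨h, hk1⟩
          rw [hfilt, Finset.mem_singleton] at this
          exact hk2 this
      funext k
      by_cases hk : k < p
      · rw [flip_ne_apply y (by omega : k ≠ j'), flip_ne_apply x (by omega : k ≠ i),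
          hagree k hk]
      · by_cases hk2 : k = p
        · subst hk2
          have e1 : flip j' y k = y k + 1 := by rw [hcase2]; exact flip_same k y
          have e2 : flip i x k = x k := flip_ne_apply x (by omega : k ≠ i)
          rw [e1, e2, hyp, hxp]
          decide
        · -- k > p
          have hkp : p < k := by
            rcases lt_trichotomy k p with h | h | h
            · exact absurd h hk
            · exact absurd h hk2
            · exact h
          have hyk : y k = 0 := by
            rcases z2cases (y k) with h | h
            · exact h
            · exfalso
              have := Finset.le_max' (supp y) k (mem_supp.mpr h)
              omega
          by_cases hk3 : k = i
          · subst hk3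
            rw [flip_ne_apply y (by omega : k ≠ j'), flip_same, hyk, hi]
            decide
          · rw [flip_ne_apply y (by omega : k ≠ j'), flip_ne_apply x hk3, hyk,
              hxk k hk hk3]
    · -- p < j' : use witness p
      right
      have hpj'' : p < j' := lt_of_le_of_ne hpj' (fun h => hcase2 h.symm)
      refine Or.inr ⟨hwAB, p, ?_, ?_, ?_⟩
      · rw [flip_ne_apply y (by omega : p ≠ j'), flip_ne_apply x (by omega : p ≠ i), hyp, hxp]
        decide
      · rw [flip_ne_apply y (by omega : p ≠ j'), hyp]
      · intro j hj
        rw [flip_ne_apply y (by omega : j ≠ j'), flip_ne_apply x (by omega : j ≠ i),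
          hagree j hj]

lemma seg_zero (n : ℕ) : seg n 0 = ∅ := by
  ext x; simp [mem_seg]

lemma nb_empty (n : ℕ) : nb (∅ : Finset (V n)) = ∅ := by
  ext x; simp [mem_nb]

/-- F1: the closed neighbourhood of an initial segment is down-closed. -/
lemma nb_seg_downClosed (n t : ℕ) : DownClosed (nb (seg n t)) := by
  rcases Nat.eq_zero_or_pos t with rfl | ht
  · rw [seg_zero, nb_empty]
    intro x hx
    exact absurd hx (Finset.notMem_empty x)
  intro x hx y hlt
  by_cases hy : y ∈ seg n t
  · exact subset_nb _ hy
  have hy0 : wt y ≠ 0 := by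
    intro h0
    exact hy (mem_seg.mpr (by rw [rk_wt_zero h0]; omega))
  have hsy : (supp y).Nonempty := supp_nonempty_of_wt hy0
  set j' := (supp y).max' hsy with hj'
  have hyj' : y j' = 1 := mem_supp.mp ((supp y).max'_mem hsy)
  suffices hseg : flip j' y ∈ seg n t by
    rw [mem_nb]
    right
    refine ⟨flip j' y, hseg, ?_⟩
    rw [hammingDist_comm]
    exact dist_flip j' y
  rw [mem_nb] at hx
  by_cases hxA : x ∈ seg n t
  · exact absurd (seg_down hlt hxA) hy
  rcases hx with hx | ⟨u, hu, hd⟩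
  · exact absurd hx hxA
  obtain ⟨i, hxi, huf, hwu⟩ := lower_nbr (seg_downClosed n t) hu hxA hd
  have hwyx : wt y ≤ wt x := wt_le_of_hlt hlt
  rcases lt_or_eq_of_le hwyx with hcase | hcase
  · -- wt y < wt x, so wt (flip j' y) < wt u
    have h1 : wt (flip j' y) + 1 = wt y := wt_flip_one hyj'
    have h2 : wt (flip j' y) < wt u := by omega
    exact seg_down (hlt_of_wt_lt h2) hu
  · -- equal weights: shadow lemma
    rcases shadow_min_le hcase hlt hxi hsy with he | hl
    · rw [← hj'] at he
      rw [he, ← huf]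
      exact hu
    · rw [← hj'] at hl
      rw [← huf] at hl
      exact seg_down hl hu

lemma nb_seg_eq (n t : ℕ) : nb (seg n t) = seg n (g n t) :=
  downClosed_eq_seg (nb_seg_downClosed n t)

lemma seg_union (n a b : ℕ) : seg n a ∪ seg n b = seg n (max a b) := by
  ext x
  simp only [Finset.mem_union, mem_seg]
  omega


/-! ### Slices of the cube -/

/-- Delete coordinate `i`. -/
def del {n : ℕ} (i : Fin (n+1)) (x : V (n+1)) : V n := fun j => x (i.succAbove j)

/-- Insert value `b` at coordinate `i`. -/
def ins {n : ℕ} (i : Fin (n+1)) (b : ZMod 2) (z : V n) : V (n+1) := i.insertNth b z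

lemma ins_same {n : ℕ} (i : Fin (n+1)) (b : ZMod 2) (z : V n) : ins i b z i = b := by
  simp [ins]

lemma ins_succAbove {n : ℕ} (i : Fin (n+1)) (b : ZMod 2) (z : V n) (j : Fin n) :
    ins i b z (i.succAbove j) = z j := by
  simp [ins]

lemma del_ins {n : ℕ} (i : Fin (n+1)) (b : ZMod 2) (z : V n) : del i (ins i b z) = z := by
  funext j
  exact ins_succAbove i b z j

lemma ins_del {n : ℕ} {i : Fin (n+1)} {b : ZMod 2} {x : V (n+1)} (h : x i = b) :
    ins i b (del i x) = x := by
  rw [← h]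
  exact Fin.insertNth_self_removeNth i x

lemma ins_inj {n : ℕ} (i : Fin (n+1)) (b : ZMod 2) : Function.Injective (ins i b) := by
  intro z z' h
  rw [← del_ins i b z, ← del_ins i b z', h]

lemma ins_ne_apply {n : ℕ} {i j : Fin (n+1)} (h : j ≠ i) (b : ZMod 2) (z : V n) :
    ∃ k, i.succAbove k = j ∧ ins i b z j = z k := by
  obtain ⟨k, hk⟩ := Fin.exists_succAbove_eq h
  exact ⟨k, hk, by rw [← hk, ins_succAbove]⟩

lemma wt_ins {n : ℕ} (i : Fin (n+1)) (b : ZMod 2) (z : V n) :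
    wt (ins i b z) = (if b = 1 then 1 else 0) + wt z := by
  unfold wt hammingNorm
  rw [Finset.card_filter, Finset.card_filter]
  rw [Fin.sum_univ_succAbove (fun j => if (ins i b z) j ≠ 0 then 1 else 0) i]
  congr 1
  · rw [ins_same]
    rcases z2cases b with rfl | rfl <;> simp
  · apply Finset.sum_congr rfl
    intro k _
    rw [ins_succAbove]

lemma dist_ins_same {n : ℕ} (i : Fin (n+1)) (b : ZMod 2) (z z' : V n) :
    hammingDist (ins i b z) (ins i b z') = hammingDist z z' := by
  unfold hammingDist
  rw [Finset.card_filter, Finset.card_filter]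
  rw [Fin.sum_univ_succAbove (fun j => if (ins i b z) j ≠ (ins i b z') j then 1 else 0) i]
  rw [ins_same, ins_same]
  have h0 : (if ¬ b = b then (1:ℕ) else 0) = 0 := by simp
  rw [h0, zero_add]
  apply Finset.sum_congr rfl
  intro k _
  rw [ins_succAbove, ins_succAbove]

lemma dist_ins_diff {n : ℕ} (i : Fin (n+1)) {b b' : ZMod 2} (h : b ≠ b') (z z' : V n) :
    hammingDist (ins i b z) (ins i b' z') = hammingDist z z' + 1 := by
  unfold hammingDist
  rw [Finset.card_filter, Finset.card_filter]
  rw [Fin.sum_univ_succAbove (fun j => if (ins i b z) j ≠ (ins i b' z') j then 1 else 0) i]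
  rw [ins_same, ins_same, if_pos h, add_comm 1]
  congr 1
  apply Finset.sum_congr rfl
  intro k _
  rw [ins_succAbove, ins_succAbove]

lemma hlt_ins {n : ℕ} (i : Fin (n+1)) (b : ZMod 2) (z z' : V n) :
    halesLT (ins i b z) (ins i b z') ↔ halesLT z z' := by
  constructor
  · rintro (hw | ⟨hw, j, hne, h1, hag⟩)
    · left
      have e1 := wt_ins i b z
      have e2 := wt_ins i b z'
      unfold wt at e1 e2
      omega
    · right
      constructor
      · have e1 := wt_ins i b z
        have e2 := wt_ins i b z'
        unfold wt at e1 e2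
        omega
      · have hji : j ≠ i := by
          intro h
          subst h
          rw [ins_same, ins_same] at hne
          exact hne rfl
        obtain ⟨k, hk, hv⟩ := ins_ne_apply hji b z
        have hv2 : ins i b z' j = z' k := by rw [← hk, ins_succAbove]
        refine ⟨k, ?_, ?_, ?_⟩
        · rw [← hv, ← hv2]; exact hne
        · rw [← hv]; exact h1
        · intro k' hk'
          have := hag (i.succAbove k') (by rw [← hk]; exact (Fin.succAbove_lt_succAbove_iff).mpr hk')
          rw [ins_succAbove, ins_succAbove] at this
          exact this
  · rintro (hw | ⟨hw, k, hne, h1, hag⟩)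
    · left
      have e1 := wt_ins i b z
      have e2 := wt_ins i b z'
      unfold wt at e1 e2
      omega
    · right
      constructor
      · have e1 := wt_ins i b z
        have e2 := wt_ins i b z'
        unfold wt at e1 e2
        omega
      · refine ⟨i.succAbove k, ?_, ?_, ?_⟩
        · rw [ins_succAbove, ins_succAbove]; exact hne
        · rw [ins_succAbove]; exact h1
        · intro j' hj'
          by_cases hji : j' = i
          · subst hji; rw [ins_same, ins_same]
          · obtain ⟨k', hk', hv⟩ := ins_ne_apply hji b z
            have hv2 : ins i b z' j' = z' k' := by rw [← hk', ins_succAbove]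
            rw [hv, hv2]
            apply hag
            have : i.succAbove k' < i.succAbove k := by rw [hk']; exact hj'
            exact (Fin.succAbove_lt_succAbove_iff).mp this

/-- The slice of `A` at coordinate `i` with value `b`. -/
def slice {n : ℕ} (i : Fin (n+1)) (b : ZMod 2) (A : Finset (V (n+1))) : Finset (V n) :=
  (A.filter (fun x => x i = b)).image (del i)

lemma mem_slice {n : ℕ} {i : Fin (n+1)} {b : ZMod 2} {A : Finset (V (n+1))} {z : V n} :
    z ∈ slice i b A ↔ ins i b z ∈ A := by
  unfold slice
  rw [Finset.mem_image]
  constructor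
  · rintro ⟨x, hx, rfl⟩
    rw [Finset.mem_filter] at hx
    rw [ins_del hx.2]
    exact hx.1
  · intro h
    exact ⟨ins i b z, Finset.mem_filter.mpr ⟨h, ins_same i b z⟩, del_ins i b z⟩

lemma card_slices {n : ℕ} (i : Fin (n+1)) (A : Finset (V (n+1))) :
    A.card = (slice i 0 A).card + (slice i 1 A).card := by
  have h0 : (slice i 0 A).card = (A.filter (fun x => x i = 0)).card := by
    unfold slice
    apply Finset.card_image_of_injOn
    intro x hx y hy hxy
    rw [Finset.mem_coe, Finset.mem_filter] at hx hy
    rw [← ins_del hx.2, ← ins_del hy.2, hxy]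
  have h1 : (slice i 1 A).card = (A.filter (fun x => x i = 1)).card := by
    unfold slice
    apply Finset.card_image_of_injOn
    intro x hx y hy hxy
    rw [Finset.mem_coe, Finset.mem_filter] at hx hy
    rw [← ins_del hx.2, ← ins_del hy.2, hxy]
  rw [h0, h1]
  have hneg : A.filter (fun a => ¬ a i = 0) = A.filter (fun x => x i = 1) := by
    apply Finset.filter_congr
    intro x _
    rcases z2cases (x i) with h | h <;> rw [h] <;> decide
  rw [← hneg]
  exact (Finset.card_filter_add_card_filter_not (s := A) (p := fun x => x i = 0)).symm

lemma slice_nb {n : ℕ} (i : Fin (n+1)) (b : ZMod 2) (B : Finset (V (n+1))) :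
    slice i b (nb B) = nb (slice i b B) ∪ slice i (b+1) B := by
  ext z
  rw [mem_slice, mem_nb, Finset.mem_union, mem_nb, mem_slice, mem_slice]
  constructor
  · rintro (h | ⟨u, hu, hd⟩)
    · exact Or.inl (Or.inl h)
    · rcases z2cases (u i) with hui | hui
      · rcases z2cases b with rfl | rfl
        · -- u i = b = 0 : in-slice neighbour
          left; right
          refine ⟨del i u, mem_slice.mpr (by rw [ins_del hui]; exact hu), ?_⟩
          have : hammingDist (ins i (0:ZMod 2) (del i u)) (ins i 0 z) = hammingDist (del i u) z :=
            dist_ins_same i 0 (del i u) z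
          rw [ins_del hui] at this
          rw [← this]; exact hd
        · -- u i = 0 = b + 1: cross neighbour
          right
          have hdd : hammingDist (ins i (0:ZMod 2) (del i u)) (ins i 1 z) = hammingDist (del i u) z + 1 :=
            dist_ins_diff i (by decide) (del i u) z
          rw [ins_del hui] at hdd
          rw [hd] at hdd
          have : del i u = z := by
            have h0 : hammingDist (del i u) z = 0 := by omega
            exact eq_of_hammingDist_eq_zero h0
          rw [show ((1:ZMod 2) + 1) = 0 from by decide, ← this, ins_del hui]
          exact hu
      · rcases z2cases b with rfl | rfl
        · -- u i = 1 = b + 1 : cross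
          right
          have hdd : hammingDist (ins i (1:ZMod 2) (del i u)) (ins i 0 z) = hammingDist (del i u) z + 1 :=
            dist_ins_diff i (by decide) (del i u) z
          rw [ins_del hui] at hdd
          rw [hd] at hdd
          have : del i u = z := by
            have h0 : hammingDist (del i u) z = 0 := by omega
            exact eq_of_hammingDist_eq_zero h0
          rw [show ((0:ZMod 2) + 1) = 1 from by decide, ← this, ins_del hui]
          exact hu
        · -- u i = 1 = b : in-slice
          left; right
          refine ⟨del i u, mem_slice.mpr (by rw [ins_del hui]; exact hu), ?_⟩
          have : hammingDist (ins i (1:ZMod 2) (del i u)) (ins i 1 z) = hammingDist (del i u) z :=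
            dist_ins_same i 1 (del i u) z
          rw [ins_del hui] at this
          rw [← this]; exact hd
  · rintro ((h | ⟨w, hw, hd⟩) | h)
    · exact Or.inl h
    · right
      refine ⟨ins i b w, mem_slice.mp hw, ?_⟩
      rw [dist_ins_same]
      exact hd
    · right
      refine ⟨ins i (b+1) z, h, ?_⟩
      rw [dist_ins_diff i (by rcases z2cases b with rfl | rfl <;> decide)]
      rw [hammingDist_self]

lemma slice_downClosed {n : ℕ} {i : Fin (n+1)} {b : ZMod 2} {A : Finset (V (n+1))}
    (hA : DownClosed A) : DownClosed (slice i b A) := by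
  intro z hz z' hlt
  rw [mem_slice] at *
  exact hA _ hz _ ((hlt_ins i b z' z).mpr hlt)


/-! ### Sorted domination, potential, compression -/

lemma seg_succ {n c : ℕ} (h : c < 2 ^ n) :
    seg n (c+1) = insert (elt n c) (seg n c) := by
  ext x
  rw [mem_seg, Finset.mem_insert, mem_seg]
  constructor
  · intro hx
    rcases Nat.lt_or_ge (rk x) c with h1 | h1
    · exact Or.inr h1
    · have hc : rk x = c := by omega
      left
      apply rk_inj
      rw [hc, rk_elt h]
  · rintro (rfl | h1)
    · rw [rk_elt h]; omega
    · omega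

lemma elt_not_mem_seg {n c : ℕ} (h : c < 2 ^ n) : elt n c ∉ seg n c := by
  rw [mem_seg, rk_elt h]; omega

/-- Initial segments minimize strictly monotone sums. -/
lemma sum_dom {n : ℕ} (f : V n → ℕ) (hf : ∀ {x y : V n}, halesLT x y → f x < f y) :
    ∀ (c : ℕ) (S : Finset (V n)), S.card = c →
      ((∑ x ∈ seg n c, f x) ≤ ∑ x ∈ S, f x ∧
        (S ≠ seg n c → (∑ x ∈ seg n c, f x) < ∑ x ∈ S, f x)) := by
  intro c
  induction c using Nat.strong_induction_on with
  | _ c IH =>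
    intro S hS
    rcases Nat.eq_zero_or_pos c with rfl | hc
    · have hS0 : S = ∅ := Finset.card_eq_zero.mp hS
      subst hS0
      constructor
      · simp [seg_zero]
      · intro h
        exact absurd (by rw [seg_zero]) h
    · have hSne : S.Nonempty := Finset.card_pos.mp (by omega)
      obtain ⟨xM, hxM, hmax⟩ := Finset.exists_max_image S rk hSne
      have hcle : c ≤ 2 ^ n := by
        rw [← hS]
        calc S.card ≤ Finset.univ.card := Finset.card_le_univ S
          _ = 2 ^ n := Finset.card_univ.trans (card_V n)
      have hrkM : c - 1 ≤ rk xM := by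
        by_contra hcon
        push_neg at hcon
        have hsub : S.image rk ⊆ Finset.range (c-1) := by
          intro k hk
          obtain ⟨x, hx, rfl⟩ := Finset.mem_image.mp hk
          exact Finset.mem_range.mpr (lt_of_le_of_lt (hmax x hx) hcon)
        have := Finset.card_le_card hsub
        rw [Finset.card_image_of_injective _ rk_inj, hS, Finset.card_range] at this
        omega
      have hc1 : c - 1 < 2 ^ n := by omega
      have hfle : f (elt n (c-1)) ≤ f xM ∧ (c - 1 < rk xM → f (elt n (c-1)) < f xM) := by
        rcases eq_or_lt_of_le hrkM with he | hl
        · have hee : elt n (c-1) = xM := rk_inj (by rw [rk_elt hc1]; exact he)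
          rw [hee]
          exact ⟨le_refl _, fun h => absurd he (by omega)⟩
        · have hlt : halesLT (elt n (c-1)) xM := hlt_of_rk_lt (by rw [rk_elt hc1]; exact hl)
          exact ⟨le_of_lt (hf hlt), fun _ => hf hlt⟩
      have hS' : (S.erase xM).card = c - 1 := by rw [Finset.card_erase_of_mem hxM, hS]
      have IH' := IH (c-1) (by omega) (S.erase xM) hS'
      have hsegsucc : seg n c = insert (elt n (c-1)) (seg n (c-1)) := by
        have hcc : c - 1 + 1 = c := by omega
        rw [← hcc]
        exact seg_succ hc1
      have hsum1 : (∑ x ∈ seg n c, f x) = f (elt n (c-1)) + ∑ x ∈ seg n (c-1), f x := by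
        rw [hsegsucc, Finset.sum_insert (elt_not_mem_seg hc1)]
      have hsum2 : (∑ x ∈ S, f x) = f xM + ∑ x ∈ S.erase xM, f x :=
        (Finset.add_sum_erase S f hxM).symm
      constructor
      · rw [hsum1, hsum2]
        exact Nat.add_le_add hfle.1 IH'.1
      · intro hne
        rw [hsum1, hsum2]
        rcases eq_or_lt_of_le hrkM with he | hl
        · have hxMe : elt n (c-1) = xM := rk_inj (by rw [rk_elt hc1]; exact he)
          have hS'ne : S.erase xM ≠ seg n (c-1) := by
            intro hcon
            apply hne
            rw [hsegsucc, ← hcon, hxMe]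
            exact (Finset.insert_erase hxM).symm
          have h1 := IH'.2 hS'ne
          have h2 := hfle.1
          omega
        · have h1 := hfle.2 hl
          have h2 := IH'.1
          omega

/-- The potential of a set: sum of the ranks. -/
def pot {n : ℕ} (A : Finset (V n)) : ℕ := ∑ x ∈ A, rk x

/-- Compression in direction `i`. -/
def comp {n : ℕ} (i : Fin (n+1)) (A : Finset (V (n+1))) : Finset (V (n+1)) :=
  ((seg n (slice i 0 A).card).image (ins i 0)) ∪ ((seg n (slice i 1 A).card).image (ins i 1))

lemma ins_mem_image_same {n : ℕ} {i : Fin (n+1)} {b : ZMod 2} {z : V n} {T : Finset (V n)} :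
    ins i b z ∈ T.image (ins i b) ↔ z ∈ T := by
  rw [Finset.mem_image]
  constructor
  · rintro ⟨w, hw, he⟩
    rwa [← ins_inj i b he]
  · intro h
    exact ⟨z, h, rfl⟩

lemma ins_not_mem_image_diff {n : ℕ} {i : Fin (n+1)} {b b' : ZMod 2} (h : b' ≠ b) {z : V n}
    {T : Finset (V n)} : ins i b z ∉ T.image (ins i b') := by
  rw [Finset.mem_image]
  rintro ⟨w, hw, he⟩
  have := congrFun he i
  rw [ins_same, ins_same] at this
  exact h this

lemma slice_comp_zero {n : ℕ} (i : Fin (n+1)) (A : Finset (V (n+1))) :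
    slice i 0 (comp i A) = seg n (slice i 0 A).card := by
  ext z
  rw [mem_slice]
  unfold comp
  rw [Finset.mem_union]
  constructor
  · rintro (h | h)
    · exact ins_mem_image_same.mp h
    · exact absurd h (ins_not_mem_image_diff (by decide))
  · intro h
    exact Or.inl (ins_mem_image_same.mpr h)

lemma slice_comp_one {n : ℕ} (i : Fin (n+1)) (A : Finset (V (n+1))) :
    slice i 1 (comp i A) = seg n (slice i 1 A).card := by
  ext z
  rw [mem_slice]
  unfold comp
  rw [Finset.mem_union]
  constructor
  · rintro (h | h)
    · exact absurd h (ins_not_mem_image_diff (by decide))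
    · exact ins_mem_image_same.mp h
  · intro h
    exact Or.inr (ins_mem_image_same.mpr h)

lemma card_slice_le {n : ℕ} (i : Fin (n+1)) (b : ZMod 2) (A : Finset (V (n+1))) :
    (slice i b A).card ≤ 2 ^ n := by
  calc (slice i b A).card ≤ Finset.univ.card := Finset.card_le_univ _
    _ = 2 ^ n := Finset.card_univ.trans (card_V n)

lemma card_comp {n : ℕ} (i : Fin (n+1)) (A : Finset (V (n+1))) :
    (comp i A).card = A.card := by
  unfold comp
  rw [Finset.card_union_of_disjoint]
  · rw [Finset.card_image_of_injective _ (ins_inj i 0),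
      Finset.card_image_of_injective _ (ins_inj i 1),
      card_seg_of_le (card_slice_le i 0 A), card_seg_of_le (card_slice_le i 1 A)]
    exact (card_slices i A).symm
  · rw [Finset.disjoint_left]
    intro x hx hx'
    obtain ⟨w, hw, rfl⟩ := Finset.mem_image.mp hx
    exact ins_not_mem_image_diff (by decide) hx'

lemma nb_comp_card_le {n : ℕ} (hn : ∀ B : Finset (V n), g n B.card ≤ (nb B).card)
    (i : Fin (n+1)) (A : Finset (V (n+1))) :
    (nb (comp i A)).card ≤ (nb A).card := by
  rw [card_slices i (nb (comp i A)), card_slices i (nb A)]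
  have key : ∀ b b' : ZMod 2, b' = b + 1 →
      slice i b' (comp i A) = seg n (slice i b' A).card →
      (∀ C : Finset (V (n+1)), slice i b' C = seg n (slice i b' A).card →
        slice i (b' + 1) C = seg n (slice i (b'+1) A).card) → True := fun _ _ _ _ _ => trivial
  -- bound for side 0
  have side : ∀ b b' : ZMod 2, b + 1 = b' →
      (slice i b (nb (comp i A))).card ≤ (slice i b (nb A)).card := by
    intro b b' hbb
    have e1 : slice i b (nb (comp i A)) =
        seg n (max (g n (slice i b A).card) (slice i b' A).card) := by
      rw [slice_nb, hbb]
      have ec : slice i b (comp i A) = seg n (slice i b A).card := by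
        rcases z2cases b with rfl | rfl
        · exact slice_comp_zero i A
        · exact slice_comp_one i A
      have ec' : slice i b' (comp i A) = seg n (slice i b' A).card := by
        rcases z2cases b' with rfl | rfl
        · exact slice_comp_zero i A
        · exact slice_comp_one i A
      rw [ec, ec', nb_seg_eq, seg_union]
    have hmaxle : max (g n (slice i b A).card) (slice i b' A).card ≤ 2 ^ n :=
      max_le (g_le_pow n _) (card_slice_le i b' A)
    have c1 : (slice i b (nb (comp i A))).card =
        max (g n (slice i b A).card) (slice i b' A).card := by
      rw [e1, card_seg]
      omega
    rw [c1]
    have r1 : nb (slice i b A) ⊆ slice i b (nb A) := by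
      rw [slice_nb, hbb]
      exact Finset.subset_union_left
    have r2 : slice i b' A ⊆ slice i b (nb A) := by
      rw [slice_nb, hbb]
      exact Finset.subset_union_right
    have b1 : g n (slice i b A).card ≤ (slice i b (nb A)).card :=
      le_trans (hn (slice i b A)) (Finset.card_le_card r1)
    have b2 : (slice i b' A).card ≤ (slice i b (nb A)).card := Finset.card_le_card r2
    omega
  exact Nat.add_le_add (side 0 1 (by decide)) (side 1 0 (by decide))

lemma sum_rk_filter {n : ℕ} (i : Fin (n+1)) (b : ZMod 2) (A : Finset (V (n+1))) :
    ∑ x ∈ A.filter (fun x => x i = b), rk x = ∑ z ∈ slice i b A, rk (ins i b z) := by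
  unfold slice
  rw [Finset.sum_image]
  · apply Finset.sum_congr rfl
    intro x hx
    rw [Finset.mem_filter] at hx
    rw [ins_del hx.2]
  · intro x hx y hy hxy
    rw [Finset.mem_coe, Finset.mem_filter] at hx hy
    rw [← ins_del hx.2, ← ins_del hy.2, hxy]

lemma filter_one_eq {n : ℕ} (i : Fin (n+1)) (A : Finset (V (n+1))) :
    A.filter (fun a => ¬ a i = 0) = A.filter (fun x => x i = 1) := by
  apply Finset.filter_congr
  intro x _
  rcases z2cases (x i) with h | h <;> rw [h] <;> decide

lemma pot_split {n : ℕ} (i : Fin (n+1)) (A : Finset (V (n+1))) :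
    pot A = (∑ z ∈ slice i 0 A, rk (ins i 0 z)) + ∑ z ∈ slice i 1 A, rk (ins i 1 z) := by
  unfold pot
  rw [← sum_rk_filter, ← sum_rk_filter, ← filter_one_eq]
  exact (Finset.sum_filter_add_sum_filter_not A (fun x => x i = 0) rk).symm

lemma pot_comp_lt {n : ℕ} (i : Fin (n+1)) (A : Finset (V (n+1)))
    (hbad : ¬ DownClosed (slice i 0 A) ∨ ¬ DownClosed (slice i 1 A)) :
    pot (comp i A) < pot A := by
  rw [pot_split i A, pot_split i (comp i A), slice_comp_zero, slice_comp_one]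
  have hmono0 : ∀ {z z' : V n}, halesLT z z' → rk (ins i 0 z) < rk (ins i 0 z') :=
    fun h => rk_lt_rk ((hlt_ins i 0 _ _).mpr h)
  have hmono1 : ∀ {z z' : V n}, halesLT z z' → rk (ins i 1 z) < rk (ins i 1 z') :=
    fun h => rk_lt_rk ((hlt_ins i 1 _ _).mpr h)
  have h0 := sum_dom (fun z => rk (ins i 0 z)) hmono0 (slice i 0 A).card (slice i 0 A) rfl
  have h1 := sum_dom (fun z => rk (ins i 1 z)) hmono1 (slice i 1 A).card (slice i 1 A) rfl
  rcases hbad with hb | hb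
  · have hne : slice i 0 A ≠ seg n (slice i 0 A).card := by
      intro hcon
      exact hb (hcon ▸ seg_downClosed n (slice i 0 A).card)
    exact add_lt_add_of_lt_of_le (h0.2 hne) h1.1
  · have hne : slice i 1 A ≠ seg n (slice i 1 A).card := by
      intro hcon
      exact hb (hcon ▸ seg_downClosed n (slice i 1 A).card)
    exact add_lt_add_of_le_of_lt h0.1 (h1.2 hne)


/-! ### Complement, classification of stable sets, and Harper's theorem -/

lemma z2succ_ne (a : ZMod 2) : a + 1 ≠ a := by revert a; decide

lemma z2swap {a b : ZMod 2} (h : a = b + 1) : b = a + 1 := by revert h; revert b; revert a; decide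

lemma flip_flip {n : ℕ} (i : Fin n) (x : V n) : flip i (flip i x) = x := by
  funext j
  by_cases hj : j = i
  · subst hj
    rw [flip_same, flip_same]
    rcases z2cases (x j) with h | h <;> rw [h] <;> decide
  · rw [flip_ne_apply _ hj, flip_ne_apply _ hj]

/-- Complement (flip all coordinates). -/
def cpl {n : ℕ} (x : V n) : V n := fun j => x j + 1

lemma cpl_inj {n : ℕ} : Function.Injective (cpl : V n → V n) := by
  intro x y h
  funext j
  have := congrFun h j
  exact add_right_cancel this

lemma harper_step {n : ℕ} (hn : ∀ B : Finset (V n), g n B.card ≤ (nb B).card) :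
    ∀ A : Finset (V (n+1)), g (n+1) A.card ≤ (nb A).card := by
  suffices h : ∀ (k : ℕ) (A : Finset (V (n+1))), pot A < k → g (n+1) A.card ≤ (nb A).card by
    intro A
    exact h (pot A + 1) A (by omega)
  intro k
  induction k with
  | zero => intro A h; omega
  | succ k IH =>
    intro A hpot
    by_cases hstable : ∀ (i : Fin (n+1)) (b : ZMod 2), DownClosed (slice i b A)
    · by_cases hdc : DownClosed A
      · have hAe := downClosed_eq_seg hdc
        have he : g (n+1) A.card = (nb A).card := by
          conv_rhs => rw [hAe]
          rfl
        exact le_of_eq he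
      · -- classification of the stable, non-initial set
        have hviol : ∃ x ∈ A, ∃ y, halesLT y x ∧ y ∉ A := by
          unfold DownClosed at hdc
          push_neg at hdc
          obtain ⟨x, hx, y, h1, h2⟩ := hdc
          exact ⟨x, hx, y, h1, h2⟩
        obtain ⟨w, hw, v, hvw, hv⟩ := hviol
        have hcompl : ∀ x ∈ A, ∀ y, halesLT y x → y ∉ A → y = cpl x := by
          intro x hx y hyx hy
          funext j
          show y j = x j + 1
          by_contra hne
          have hyj : y j = x j := by
            rcases z2cases (x j) with h | h <;> rcases z2cases (y j) with h' | h' <;>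
              rw [h, h'] at hne ⊢ <;> first | rfl | (exfalso; exact hne (by decide))
          have hxs : del j x ∈ slice j (x j) A := mem_slice.mpr (by rw [ins_del rfl]; exact hx)
          have hyx' : halesLT (del j y) (del j x) := by
            apply (hlt_ins j (x j) _ _).mp
            rw [ins_del hyj, ins_del rfl]
            exact hyx
          have hmem := hstable j (x j) _ hxs _ hyx'
          rw [mem_slice, ins_del hyj] at hmem
          exact hy hmem
        have hvw2 : v = cpl w := hcompl w hw v hvw hv
        have hAeq : A = insert w ((seg (n+1) (rk w)).erase v) := by
          ext z
          rw [Finset.mem_insert, Finset.mem_erase, mem_seg]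
          constructor
          · intro hz
            rcases hlt_trichotomy z w with h | h | h
            · right
              refine ⟨?_, rk_lt_rk h⟩
              rintro rfl
              exact hv hz
            · exact Or.inl h
            · exfalso
              have h2 : halesLT v z := hlt_trans hvw h
              have h3 := hcompl z hz v h2 hv
              rw [hvw2] at h3
              have h4 : w = z := cpl_inj h3
              rw [h4] at h
              exact hlt_irrefl z h
          · rintro (rfl | ⟨hzv, hzrk⟩)
            · exact hw
            · by_contra hz
              have := hcompl w hw z (hlt_of_rk_lt hzrk) hz
              rw [← hvw2] at this
              exact hzv this
        have hmemA : ∀ z : V (n+1), z = w ∨ (z ≠ v ∧ rk z < rk w) → z ∈ A := by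
          intro z hz
          rw [hAeq, Finset.mem_insert, Finset.mem_erase, mem_seg]
          tauto
        by_cases hv0 : wt v = 0
        · -- w is the all-ones (top) vector: nb A = univ
          have hvz : v = (fun _ => 0) := (wt_zero_iff v).mp hv0
          have hw1 : ∀ j, w j = 1 := by
            intro j
            have h1 := congrFun hvw2 j
            have h2 := congrFun hvz j
            simp only [cpl] at h1
            rw [h2] at h1
            rcases z2cases (w j) with h | h
            · rw [h] at h1; exact absurd h1 (by decide)
            · exact h
          have hwtw : wt w = n + 1 := by
            rw [wt_eq_card_supp]
            have : supp w = Finset.univ := by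
              apply Finset.eq_univ_of_forall
              intro j
              exact mem_supp.mpr (hw1 j)
            rw [this, Finset.card_univ, Fintype.card_fin]
          have htop : ∀ x : V (n+1), x = w ∨ halesLT x w := by
            intro x
            by_cases hxw : x = w
            · exact Or.inl hxw
            · right
              apply hlt_of_wt_lt
              rw [hwtw]
              have h1 := wt_le x
              rcases Nat.lt_or_ge (wt x) (n+1) with h2 | h2
              · exact h2
              · exfalso
                apply hxw
                have hwtx : wt x = n + 1 := by omega
                funext j
                rw [hw1 j]
                by_contra hc
                have hj0 : x j = 0 := by
                  rcases z2cases (x j) with h | h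
                  · exact h
                  · exact absurd h hc
                have hsub : supp x ⊆ Finset.univ.erase j := by
                  intro t ht
                  rw [Finset.mem_erase]
                  refine ⟨?_, Finset.mem_univ t⟩
                  rintro rfl
                  rw [mem_supp, hj0] at ht
                  exact absurd ht (by decide)
                have := Finset.card_le_card hsub
                rw [Finset.card_erase_of_mem (Finset.mem_univ j), Finset.card_univ,
                  Fintype.card_fin, ← wt_eq_card_supp] at this
                omega
          have hxmem : ∀ x : V (n+1), x ≠ v → x ∈ A := by
            intro x hxv
            apply hmemA
            rcases htop x with h | h
            · exact Or.inl h
            · exact Or.inr ⟨hxv, rk_lt_rk h⟩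
          have hnb : nb A = Finset.univ := by
            apply Finset.eq_univ_of_forall
            intro x
            by_cases hxv : x = v
            · subst hxv
              rw [mem_nb]
              right
              refine ⟨flip 0 x, ?_, by rw [hammingDist_comm]; exact dist_flip 0 x⟩
              apply hxmem
              exact flip_ne 0 x
            · exact subset_nb A (hxmem x hxv)
          rw [hnb]
          calc g (n+1) A.card ≤ 2 ^ (n+1) := g_le_pow _ _
            _ = Finset.univ.card := (Finset.card_univ.trans (card_V (n+1))).symm
        · -- main exceptional case
          have hsv : (supp v).Nonempty := supp_nonempty_of_wt hv0
          have hcard : A.card = rk w := by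
            rw [hAeq, Finset.card_insert_of_notMem, Finset.card_erase_of_mem,
              card_seg_of_le (le_of_lt (rk_lt_pow w))]
            · have := rk_lt_rk hvw
              omega
            · rw [mem_seg]; exact rk_lt_rk hvw
            · intro hcon
              rw [Finset.mem_erase, mem_seg] at hcon
              omega
          have hsupp : supp v = (supp w)ᶜ := by
            ext j
            rw [mem_supp, Finset.mem_compl, mem_supp]
            have h1 := congrFun hvw2 j
            simp only [cpl] at h1
            rw [h1]
            rcases z2cases (w j) with h | h <;> rw [h] <;> decide
          have hwtvw : wt v + wt w = n + 1 := by
            rw [wt_eq_card_supp, wt_eq_card_supp, hsupp, Finset.card_compl]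
            have h1 : (supp w).card ≤ n + 1 := by
              calc (supp w).card ≤ Finset.univ.card := Finset.card_le_univ _
                _ = n + 1 := Finset.card_univ.trans (Fintype.card_fin (n+1))
            rw [Fintype.card_fin]
            omega
          have hsub : nb (seg (n+1) (rk w)) ⊆ nb A := by
            intro x hx
            rw [mem_nb] at hx ⊢
            rcases hx with hx | ⟨u, hu, hd⟩
            · by_cases hxv : x = v
              · subst hxv
                right
                refine ⟨flip ((supp x).max' hsv) x, ?_,
                  by rw [hammingDist_comm]; exact dist_flip _ _⟩
                apply hmemA
                right
                refine ⟨flip_ne _ x, ?_⟩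
                have h1 : wt (flip ((supp x).max' hsv) x) + 1 = wt x :=
                  wt_flip_one (mem_supp.mp (Finset.max'_mem _ hsv))
                apply rk_lt_rk
                exact hlt_trans (hlt_of_wt_lt (by omega)) hvw
              · exact Or.inl (hmemA x (Or.inr ⟨hxv, mem_seg.mp hx⟩))
            · by_cases huv : u = v
              · subst huv
                by_cases hxw : x = w
                · subst hxw
                  exact Or.inl (hmemA x (Or.inl rfl))
                · by_cases hxseg : x ∈ seg (n+1) (rk w)
                  · left
                    apply hmemA
                    right
                    refine ⟨?_, mem_seg.mp hxseg⟩
                    rintro rfl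
                    rw [hammingDist_self] at hd
                    omega
                  · right
                    have hwx : halesLT w x := by
                      rcases hlt_trichotomy x w with h | h | h
                      · exact absurd (mem_seg.mpr (rk_lt_rk h)) hxseg
                      · exact absurd h hxw
                      · exact h
                    obtain ⟨j, hj⟩ := eq_flip_of_dist_one hd
                    have hxflip : x = flip j u := by rw [hj, flip_flip]
                    have hvj : u j = 0 ∧ wt x = wt u + 1 := by
                      rcases z2cases (u j) with h | h
                      · exact ⟨h, by rw [hxflip]; exact wt_flip_zero h⟩
                      · exfalso
                        have h1 : wt (flip j u) + 1 = wt u := wt_flip_one h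
                        have h2 : wt w ≤ wt x := wt_le_of_hlt hwx
                        have h3 : wt u ≤ wt w := wt_le_of_hlt hvw
                        rw [hxflip] at h2
                        omega
                    rcases lt_or_eq_of_le (wt_le_of_hlt hvw) with hlt2 | heq
                    · -- wt v < wt w
                      obtain ⟨i0, hi0⟩ := hsv
                      have hij : i0 ≠ j := by
                        intro h
                        rw [h, mem_supp, hvj.1] at hi0
                        exact absurd hi0 (by decide)
                      refine ⟨flip i0 x, ?_, by rw [hammingDist_comm]; exact dist_flip _ _⟩
                      apply hmemA
                      right
                      constructor
                      · intro hcon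
                        have hc := congrFun hcon j
                        rw [flip_ne_apply x (Ne.symm hij), hxflip, flip_same] at hc
                        exact z2succ_ne _ hc
                      · have hx_i0 : x i0 = 1 := by
                          rw [hxflip, flip_ne_apply u hij]
                          exact mem_supp.mp hi0
                        have h1 : wt (flip i0 x) + 1 = wt x := wt_flip_one hx_i0
                        apply rk_lt_rk
                        apply hlt_of_wt_lt
                        omega
                    · -- wt v = wt w
                      have hv0' : u 0 = 1 := by
                        rcases hvw with hlt' | ⟨hwne, p, hne, hvp, hag⟩
                        · exfalso; unfold wt at heq; omega
                        · have hp0 : p = 0 := by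
                            by_contra hp
                            have h0p : (0 : Fin (n+1)) < p := Fin.pos_of_ne_zero hp
                            have h1 := hag 0 h0p
                            have h2 := congrFun hvw2 0
                            simp only [cpl] at h2
                            rw [h1] at h2
                            exact z2succ_ne _ h2.symm
                          rw [← hp0]; exact hvp
                      have hj0 : j ≠ 0 := by
                        intro h
                        rw [h] at hvj
                        rw [hvj.1] at hv0'
                        exact absurd hv0' (by decide)
                      by_cases hwt1 : wt u = 1
                      · -- n = 1 degenerate case : the other neighbour is w itself
                        have hn2 : n + 1 = 2 := by omega
                        refine ⟨w, hmemA w (Or.inl rfl), ?_⟩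
                        have hwflip : w = flip 0 x := by
                          funext t
                          have hct := congrFun hvw2 t
                          simp only [cpl] at hct
                          by_cases ht0 : t = 0
                          · subst ht0
                            rw [flip_same, hxflip, flip_ne_apply u (Ne.symm hj0)]
                            exact z2swap hct
                          · have htj : t = j := by
                              apply Fin.ext
                              have h1 := t.isLt
                              have h2 := j.isLt
                              have h3 : t.val ≠ 0 := fun hc => ht0 (Fin.ext hc)
                              have h4 : j.val ≠ 0 := fun hc => hj0 (Fin.ext hc)
                              omega
                            subst htj
                            rw [flip_ne_apply x ht0, hxflip, flip_same, hvj.1]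
                            rw [hvj.1] at hct
                            exact z2swap hct
                        rw [hwflip, hammingDist_comm]
                        exact dist_flip _ _
                      · -- wt v ≥ 2
                        have hwt2 : 2 ≤ wt u := by omega
                        have hi1mem := Finset.max'_mem (supp u) hsv
                        have hi1 : u ((supp u).max' hsv) = 1 := mem_supp.mp hi1mem
                        have hi1ne0 : (supp u).max' hsv ≠ 0 := by
                          intro h
                          have hsubs : supp u ⊆ {0} := by
                            intro t ht
                            have hle := Finset.le_max' (supp u) t ht
                            rw [h] at hle
                            rw [Finset.mem_singleton]
                            exact Fin.le_zero_iff.mp hle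
                          have := Finset.card_le_card hsubs
                          rw [Finset.card_singleton, ← wt_eq_card_supp] at this
                          omega
                        have hi1j : (supp u).max' hsv ≠ j := by
                          intro h
                          rw [h, hvj.1] at hi1
                          exact absurd hi1 (by decide)
                        refine ⟨flip ((supp u).max' hsv) x, ?_,
                          by rw [hammingDist_comm]; exact dist_flip _ _⟩
                        apply hmemA
                        right
                        constructor
                        · intro hcon
                          have hc := congrFun hcon j
                          rw [flip_ne_apply x (Ne.symm hi1j), hxflip, flip_same] at hc
                          exact z2succ_ne _ hc
                        · have hx_i1 : x ((supp u).max' hsv) = 1 := by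
                            rw [hxflip, flip_ne_apply u hi1j]
                            exact hi1
                          have h1 : wt (flip ((supp u).max' hsv) x) + 1 = wt x :=
                            wt_flip_one hx_i1
                          have hwteq : wt (flip ((supp u).max' hsv) x) = wt w := by omega
                          have hf0 : flip ((supp u).max' hsv) x 0 = 1 := by
                            rw [flip_ne_apply x (Ne.symm hi1ne0), hxflip,
                              flip_ne_apply u (Ne.symm hj0)]
                            exact hv0'
                          have hw0 : w 0 = 0 := by
                            have hc := congrFun hvw2 0
                            simp only [cpl] at hc
                            rw [hv0'] at hc
                            rcases z2cases (w 0) with h | h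
                            · exact h
                            · rw [h] at hc; exact absurd hc (by decide)
                          apply rk_lt_rk
                          right
                          refine ⟨hwteq, 0, ?_, hf0, ?_⟩
                          · rw [hf0, hw0]; decide
                          · intro j' hj'
                            exact absurd hj' (Fin.not_lt_zero j')
              · right
                exact ⟨u, hmemA u (Or.inr ⟨huv, mem_seg.mp hu⟩), hd⟩
          rw [hcard]
          calc g (n+1) (rk w) = (nb (seg (n+1) (rk w))).card := rfl
            _ ≤ (nb A).card := Finset.card_le_card hsub
    · push_neg at hstable
      obtain ⟨i, b, hbad⟩ := hstable
      have hbad2 : ¬ DownClosed (slice i 0 A) ∨ ¬ DownClosed (slice i 1 A) := by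
        rcases z2cases b with rfl | rfl
        · exact Or.inl hbad
        · exact Or.inr hbad
      have h1 := pot_comp_lt i A hbad2
      have h2 := IH (comp i A) (by omega)
      rw [card_comp] at h2
      exact le_trans h2 (nb_comp_card_le hn i A)

theorem harper : ∀ (n : ℕ) (A : Finset (V n)), g n A.card ≤ (nb A).card := by
  intro n
  induction n with
  | zero =>
    intro A
    rcases Finset.eq_empty_or_nonempty A with rfl | hA
    · rw [Finset.card_empty]
      have : seg 0 0 = ∅ := seg_zero 0
      unfold g
      rw [this, nb_empty]
    · have h1 : A.card ≤ 2 ^ 0 := by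
        calc A.card ≤ Finset.univ.card := Finset.card_le_univ _
          _ = 2 ^ 0 := Finset.card_univ.trans (card_V 0)
      calc g 0 A.card ≤ 2 ^ 0 := g_le_pow 0 _
        _ = 1 := by norm_num
        _ ≤ (nb A).card := by
            have := Finset.card_le_card (subset_nb A)
            have h2 := Finset.card_pos.mpr hA
            omega
  | succ n IH => exact harper_step IH


/-! ### Subadditivity via the complement, and dimension monotonicity -/

lemma cpl_cpl {n : ℕ} (x : V n) : cpl (cpl x) = x := by
  funext j
  show x j + 1 + 1 = x j
  rcases z2cases (x j) with h | h <;> rw [h] <;> decide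

lemma wt_cpl {n : ℕ} (x : V n) : wt (cpl x) + wt x = n := by
  have hsupp : supp (cpl x) = (supp x)ᶜ := by
    ext j
    rw [mem_supp, Finset.mem_compl, mem_supp]
    show x j + 1 = 1 ↔ ¬ x j = 1
    rcases z2cases (x j) with h | h <;> rw [h] <;> decide
  rw [wt_eq_card_supp, wt_eq_card_supp, hsupp, Finset.card_compl]
  have h1 : (supp x).card ≤ n := by
    calc (supp x).card ≤ Finset.univ.card := Finset.card_le_univ _
      _ = n := Finset.card_univ.trans (Fintype.card_fin n)
  rw [Fintype.card_fin]
  omega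

lemma hlt_cpl {n : ℕ} {x y : V n} (h : halesLT x y) : halesLT (cpl y) (cpl x) := by
  rcases h with h | ⟨he, i, hne, hx1, hag⟩
  · left
    have h1 := wt_cpl x
    have h2 := wt_cpl y
    unfold wt at h1 h2
    omega
  · right
    constructor
    · have h1 := wt_cpl x
      have h2 := wt_cpl y
      unfold wt at h1 h2
      omega
    · refine ⟨i, ?_, ?_, ?_⟩
      · intro hc
        exact hne (add_right_cancel (a := y i) (b := (1:ZMod 2)) (c := x i) hc).symm
      · show y i + 1 = 1
        rw [z2ne10 hne hx1]
        decide
      · intro j hj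
        show y j + 1 = x j + 1
        rw [hag j hj]

lemma rk_cpl {n : ℕ} (x : V n) : rk (cpl x) + rk x + 1 = 2 ^ n := by
  have himg : Finset.univ.filter (fun y => halesLT y (cpl x)) =
      (Finset.univ.filter (fun y => halesLT x y)).image cpl := by
    ext z
    simp only [Finset.mem_filter, Finset.mem_univ, true_and, Finset.mem_image]
    constructor
    · intro h
      refine ⟨cpl z, ?_, cpl_cpl z⟩
      have := hlt_cpl h
      rwa [cpl_cpl] at this
    · rintro ⟨y, hy, rfl⟩
      exact hlt_cpl hy
  have hxnot : x ∉ Finset.univ.filter (fun y => halesLT y x) := by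
    simp only [Finset.mem_filter, Finset.mem_univ, true_and]
    exact hlt_irrefl x
  have hc1 : rk (cpl x) = (Finset.univ.filter (fun y => halesLT x y)).card := by
    unfold rk
    rw [himg, Finset.card_image_of_injective _ cpl_inj]
  have hins : Finset.univ.filter (fun z => z = x ∨ halesLT z x)
      = insert x (Finset.univ.filter (fun y => halesLT y x)) := by
    ext z
    rw [Finset.mem_filter, Finset.mem_insert, Finset.mem_filter]
    constructor
    · rintro ⟨-, h | h⟩
      · exact Or.inl h
      · exact Or.inr ⟨Finset.mem_univ z, h⟩
    · rintro (h | ⟨-, h⟩)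
      · exact ⟨Finset.mem_univ z, Or.inl h⟩
      · exact ⟨Finset.mem_univ z, Or.inr h⟩
  have hcompl2 : Finset.univ.filter (fun z => ¬ (z = x ∨ halesLT z x))
      = Finset.univ.filter (fun y => halesLT x y) := by
    apply Finset.filter_congr
    intro z _
    constructor
    · intro h
      push_neg at h
      rcases hlt_trichotomy x z with h1 | h1 | h1
      · exact h1
      · exact absurd h1.symm h.1
      · exact absurd h1 h.2
    · intro h
      push_neg
      constructor
      · rintro rfl
        exact hlt_irrefl z h
      · exact hlt_asymm h
  have hsplit := Finset.card_filter_add_card_filter_not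
    (s := (Finset.univ : Finset (V n))) (p := fun z => z = x ∨ halesLT z x)
  rw [hins, hcompl2, Finset.card_insert_of_notMem hxnot, Finset.card_univ, card_V] at hsplit
  rw [hc1]
  unfold rk
  omega

lemma dist_cpl {n : ℕ} (x y : V n) : hammingDist (cpl x) (cpl y) = hammingDist x y := by
  unfold hammingDist
  congr 1
  ext j
  simp only [Finset.mem_filter, Finset.mem_univ, true_and]
  constructor
  · intro h hc
    exact h (by show x j + 1 = y j + 1; rw [hc])
  · intro h hc
    exact h (add_right_cancel (a := x j) (b := (1:ZMod 2)) (c := y j) hc)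

lemma nb_image_cpl {n : ℕ} (B : Finset (V n)) : nb (B.image cpl) = (nb B).image cpl := by
  ext x
  constructor
  · intro hx
    rw [mem_nb] at hx
    rcases hx with h | ⟨u, hu, hd⟩
    · obtain ⟨y, hy, rfl⟩ := Finset.mem_image.mp h
      exact Finset.mem_image_of_mem cpl (subset_nb B hy)
    · obtain ⟨y, hy, rfl⟩ := Finset.mem_image.mp hu
      rw [Finset.mem_image]
      refine ⟨cpl x, ?_, cpl_cpl x⟩
      rw [mem_nb]
      right
      refine ⟨y, hy, ?_⟩
      rw [← dist_cpl, cpl_cpl]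
      exact hd
  · intro hx
    obtain ⟨y, hy, rfl⟩ := Finset.mem_image.mp hx
    rw [mem_nb] at hy
    rw [mem_nb]
    rcases hy with hy | ⟨u, hu, hd⟩
    · exact Or.inl (Finset.mem_image_of_mem cpl hy)
    · right
      exact ⟨cpl u, Finset.mem_image_of_mem cpl hu, by rw [dist_cpl]; exact hd⟩

lemma subadd {n x y : ℕ} (hxy : x + y ≤ 2 ^ n) : g n (x + y) ≤ g n x + g n y := by
  have hdisj : Disjoint (seg n x) ((seg n y).image cpl) := by
    rw [Finset.disjoint_left]
    intro z hz hz'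
    obtain ⟨t, ht, rfl⟩ := Finset.mem_image.mp hz'
    rw [mem_seg] at hz ht
    have := rk_cpl t
    omega
  have hcard : (seg n x ∪ (seg n y).image cpl).card = x + y := by
    rw [Finset.card_union_of_disjoint hdisj, Finset.card_image_of_injective _ cpl_inj,
      card_seg_of_le (by omega), card_seg_of_le (by omega)]
  have h1 := harper n (seg n x ∪ (seg n y).image cpl)
  rw [hcard] at h1
  refine le_trans h1 ?_
  calc (nb (seg n x ∪ (seg n y).image cpl)).card
      ≤ (nb (seg n x) ∪ nb ((seg n y).image cpl)).card :=
        Finset.card_le_card (nb_union_subset _ _)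
    _ ≤ (nb (seg n x)).card + (nb ((seg n y).image cpl)).card := Finset.card_union_le _ _
    _ = g n x + g n y := by
        rw [nb_image_cpl, Finset.card_image_of_injective _ cpl_inj]
        rfl

/-- Dimension monotonicity: one step. -/
lemma g_mono_dim {n a : ℕ} (ha : a ≤ 2 ^ n) : g n a ≤ g (n+1) a := by
  set A := seg (n+1) a with hA
  set s0 := (slice (0 : Fin (n+1)) 0 A).card with hs0
  set s1 := (slice (0 : Fin (n+1)) 1 A).card with hs1
  have hsplit : s0 + s1 = a := by
    rw [hs0, hs1, ← card_slices]
    exact card_seg_of_le (by calc a ≤ 2 ^ n := ha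
      _ ≤ 2 ^ (n+1) := Nat.pow_le_pow_right (by norm_num) (by omega))
  have hdc0 : DownClosed (slice (0 : Fin (n+1)) 0 A) :=
    slice_downClosed (seg_downClosed (n+1) a)
  have hdc1 : DownClosed (slice (0 : Fin (n+1)) 1 A) :=
    slice_downClosed (seg_downClosed (n+1) a)
  have he0 : slice (0 : Fin (n+1)) 0 A = seg n s0 := downClosed_eq_seg hdc0
  have he1 : slice (0 : Fin (n+1)) 1 A = seg n s1 := downClosed_eq_seg hdc1
  have hb0 : g n s0 ≤ (slice (0 : Fin (n+1)) 0 (nb A)).card := by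
    have hsubnb : nb (slice (0 : Fin (n+1)) 0 A) ⊆ slice (0 : Fin (n+1)) 0 (nb A) := by
      rw [slice_nb]
      rw [show ((0:ZMod 2)+1) = 1 from by decide]
      exact Finset.subset_union_left
    refine le_trans (le_of_eq ?_) (Finset.card_le_card hsubnb)
    rw [he0]
    rfl
  have hb1 : g n s1 ≤ (slice (0 : Fin (n+1)) 1 (nb A)).card := by
    have hsubnb : nb (slice (0 : Fin (n+1)) 1 A) ⊆ slice (0 : Fin (n+1)) 1 (nb A) := by
      rw [slice_nb]
      rw [show ((1:ZMod 2)+1) = 0 from by decide]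
      exact Finset.subset_union_left
    refine le_trans (le_of_eq ?_) (Finset.card_le_card hsubnb)
    rw [he1]
    rfl
  calc g n a = g n (s0 + s1) := by rw [hsplit]
    _ ≤ g n s0 + g n s1 := subadd (by rw [hsplit]; exact ha)
    _ ≤ (slice (0 : Fin (n+1)) 0 (nb A)).card + (slice (0 : Fin (n+1)) 1 (nb A)).card :=
        add_le_add hb0 hb1
    _ = (nb A).card := (card_slices 0 (nb A)).symm
    _ = g (n+1) a := rfl

lemma g_mono_dims {m M a : ℕ} (hM : m ≤ M) (ha : a ≤ 2 ^ m) : g m a ≤ g M a := by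
  induction M, hM using Nat.le_induction with
  | base => exact le_refl _
  | succ M hmM IH =>
    refine le_trans IH (g_mono_dim ?_)
    calc a ≤ 2 ^ m := ha
      _ ≤ 2 ^ M := Nat.pow_le_pow_right (by norm_num) hmM

/-! ### Translating the statement -/

lemma natCard_lt {m : ℕ} (x : V m) : Nat.card {y : V m | halesLT y x} = rk x := by
  have hset : {y : V m | halesLT y x} = ↑(Finset.univ.filter (fun y => halesLT y x)) := by
    ext y
    simp
  rw [hset, Nat.card_coe_set_eq, Set.ncard_coe_finset]
  rfl

lemma halesInit_eq (m a : ℕ) : halesInit m a = ↑(seg m a) := by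
  ext x
  rw [halesInit, Set.mem_setOf_eq, natCard_lt, Finset.mem_coe, mem_seg]

/-- Outer boundary as a finset. -/
def bd {n : ℕ} (A : Finset (V n)) : Finset (V n) := nb A \ A

lemma outer_eq {m : ℕ} (A : Finset (V m)) :
    outerBoundary (↑A : Set (V m)) = (↑(bd A) : Set (V m)) := by
  ext v
  simp only [outerBoundary, Set.mem_setOf_eq, bd, Finset.coe_sdiff, Set.mem_diff,
    Finset.mem_coe, mem_nb]
  constructor
  · rintro ⟨hv, u, hu, hd⟩
    exact ⟨Or.inr ⟨u, hu, hd⟩, hv⟩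
  · rintro ⟨h, hv⟩
    refine ⟨hv, ?_⟩
    rcases h with h | h
    · exact absurd h hv
    · exact h

lemma card_bd {n a : ℕ} (h : a ≤ 2 ^ n) : (bd (seg n a)).card + a = g n a := by
  unfold bd
  rw [Finset.card_sdiff_of_subset (subset_nb _), card_seg_of_le h]
  rw [show (nb (seg n a)).card = g n a from rfl]
  have := le_g h
  omega


end HarperAux

theorem stmt_15 (m M a : ℕ) (hM : m ≤ M) (ha : a ≤ 2 ^ m) :
    Nat.card (outerBoundary (halesInit m a)) ≤ Nat.card (outerBoundary (halesInit M a)) := by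
  have haM : a ≤ 2 ^ M := le_trans ha (Nat.pow_le_pow_right (by norm_num) hM)
  rw [HarperAux.halesInit_eq m a, HarperAux.halesInit_eq M a,
    HarperAux.outer_eq, HarperAux.outer_eq,
    Nat.card_coe_set_eq, Set.ncard_coe_finset, Nat.card_coe_set_eq, Set.ncard_coe_finset]
  have h1 := HarperAux.card_bd (n := m) (a := a) ha
  have h2 := HarperAux.card_bd (n := M) (a := a) haM
  have h3 := HarperAux.g_mono_dims hM ha
  omega
end

section
/- If n = 2^m − 1 for some m ≥ 1, then {0,1}^n can be partitioned into disjoint Hamming balls of radius 1: there exists a set C ⊆ F₂ⁿ of size 2^n/(n+1) such that every x ∈ F₂ⁿ is within Hamming distance 1 of exactly one element of C. -/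
namespace S19

/-- column vectors of the Hamming parity-check matrix -/
def e (m n : ℕ) (i : Fin n) : Fin m → ZMod 2 := fun j => if Nat.testBit (i + 1) j then 1 else 0

theorem e_inj (m n : ℕ) (hn : n = 2 ^ m - 1) : Function.Injective (e m n) := by
  intro i i' h
  have h2 : (i : ℕ) + 1 < 2 ^ m := by
    have := i.2; omega
  have h2' : (i' : ℕ) + 1 < 2 ^ m := by
    have := i'.2; omega
  have : (i : ℕ) + 1 = (i' : ℕ) + 1 := by
    apply Nat.eq_of_testBit_eq
    intro j
    by_cases hj : j < m
    · have := congrFun h ⟨j, hj⟩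
      simp only [e] at this
      by_cases hb : Nat.testBit ((i : ℕ) + 1) j <;>
        by_cases hb' : Nat.testBit ((i' : ℕ) + 1) j <;>
        simp [hb, hb'] at this ⊢
    · rw [Nat.testBit_eq_false_of_lt, Nat.testBit_eq_false_of_lt]
      · exact lt_of_lt_of_le h2' (Nat.pow_le_pow_right (by norm_num) (le_of_not_gt hj))
      · exact lt_of_lt_of_le h2 (Nat.pow_le_pow_right (by norm_num) (le_of_not_gt hj))
  exact Fin.ext (by omega)

theorem e_ne_zero (m n : ℕ) (hn : n = 2 ^ m - 1) (i : Fin n) : e m n i ≠ 0 := by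
  intro h
  have : (i : ℕ) + 1 = 0 := by
    apply Nat.zero_of_testBit_eq_false
    intro j
    by_cases hj : j < m
    · have := congrFun h ⟨j, hj⟩
      simp only [e, Pi.zero_apply] at this
      by_cases hb : Nat.testBit ((i : ℕ) + 1) j
      · simp [hb] at this
      · simpa using hb
    · apply Nat.testBit_eq_false_of_lt
      have hi := i.2
      have h1 : 1 ≤ 2 ^ m := Nat.one_le_two_pow
      calc (i : ℕ) + 1 < 2 ^ m := by omega
        _ ≤ 2 ^ j := Nat.pow_le_pow_right (by norm_num) (le_of_not_gt hj)
  omega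

theorem e_existsUnique (m n : ℕ) (hn : n = 2 ^ m - 1) (v : Fin m → ZMod 2) (hv : v ≠ 0) :
    ∃! i, e m n i = v := by
  set e' : Fin n → {v : Fin m → ZMod 2 // v ≠ 0} := fun i => ⟨e m n i, e_ne_zero m n hn i⟩ with he'
  have hinj : Function.Injective e' := fun i i' h => e_inj m n hn (congrArg Subtype.val h)
  have hcard : Fintype.card (Fin n) = Fintype.card {v : Fin m → ZMod 2 // v ≠ 0} := by
    rw [Fintype.card_fin, Fintype.card_subtype_compl, Fintype.card_subtype_eq]
    simp [hn, ZMod.card]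
  have hbij : Function.Bijective e' :=
    (Fintype.bijective_iff_injective_and_card e').mpr ⟨hinj, hcard⟩
  obtain ⟨i, hi⟩ := hbij.surjective ⟨v, hv⟩
  exact ⟨i, congrArg Subtype.val hi,
    fun i' h => hinj (Subtype.ext (h.trans (congrArg Subtype.val hi).symm))⟩

/-- the syndrome map -/
noncomputable def s (m n : ℕ) : (Fin n → ZMod 2) →ₗ[ZMod 2] (Fin m → ZMod 2) :=
  Fintype.linearCombination (ZMod 2) (e m n)

theorem s_single (m n : ℕ) (j : Fin n) : s m n (Pi.single j 1) = e m n j := by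
  rw [s, Fintype.linearCombination_apply_single, one_smul]

theorem s_surj (m n : ℕ) (hn : n = 2 ^ m - 1) : Function.Surjective (s m n) := by
  intro v
  by_cases hv : v = 0
  · exact ⟨0, by simp [hv]⟩
  · obtain ⟨i, hi, -⟩ := e_existsUnique m n hn v hv
    exact ⟨Pi.single i 1, (s_single m n i).trans hi⟩

noncomputable def C (m n : ℕ) : Finset (Fin n → ZMod 2) :=
  Finset.univ.filter (fun x => s m n x = 0)

theorem mem_C (m n : ℕ) (x : Fin n → ZMod 2) : x ∈ C m n ↔ s m n x = 0 := by
  simp [C]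

theorem card_C (m n : ℕ) (hn : n = 2 ^ m - 1) : (C m n).card = 2 ^ (n - m) := by
  classical
  have hrange : LinearMap.range (s m n) = ⊤ :=
    LinearMap.range_eq_top.mpr (s_surj m n hn)
  have h1 := LinearMap.finrank_range_add_finrank_ker (s m n)
  rw [hrange, finrank_top] at h1
  have h2 : Module.finrank (ZMod 2) (Fin m → ZMod 2) = m := by
    simp [Module.finrank_pi]
  have h3 : Module.finrank (ZMod 2) (Fin n → ZMod 2) = n := by
    simp [Module.finrank_pi]
  rw [h2, h3] at h1
  have hcard : Fintype.card (LinearMap.ker (s m n)) = 2 ^ (n - m) := by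
    rw [Module.card_eq_pow_finrank (K := ZMod 2), ZMod.card]
    congr 1
    omega
  rw [← hcard, Fintype.card_eq_nat_card, ← Nat.card_eq_finsetCard]
  exact Nat.card_congr (Equiv.subtypeEquivRight (by intro x; simp [C, LinearMap.mem_ker]))

theorem dist_le_one_iff {n : ℕ} (x c : Fin n → ZMod 2) :
    hammingDist x c ≤ 1 ↔ c = x ∨ ∃ j, c = x + Pi.single j 1 := by
  constructor
  · intro h
    rw [show hammingDist x c = hammingNorm (x - c) by simp [hammingNorm, hammingDist, sub_eq_zero]] at h
    interval_cases hN : hammingNorm (x - c)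
    · left
      have := hammingNorm_eq_zero.mp hN
      have : x = c := by rwa [sub_eq_zero] at this
      exact this.symm
    · right
      have h1 : (Finset.univ.filter fun j => (x - c) j ≠ 0).card = 1 := hN
      obtain ⟨j, hj⟩ := Finset.card_eq_one.mp h1
      refine ⟨j, funext fun k => ?_⟩
      by_cases hk : k = j
      · subst hk
        have hne : (x - c) k ≠ 0 := by
          have : k ∈ Finset.univ.filter fun j => (x - c) j ≠ 0 := by rw [hj]; simp
          simpa using this
        have : (x - c) k = 1 := by
          revert hne; generalize (x - c) k = a; revert a; decide
        have hxc : x k - c k = 1 := this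
        have : c k = x k + 1 := by
          have h2 : ∀ a b : ZMod 2, a - b = 1 → b = a + 1 := by decide
          exact h2 _ _ hxc
        simpa [Pi.single_apply] using this
      · have hzero : (x - c) k = 0 := by
          by_contra hne
          have : k ∈ Finset.univ.filter fun j => (x - c) j ≠ 0 := by simpa using hne
          rw [hj] at this
          exact hk (Finset.mem_singleton.mp this)
        have : c k = x k := by
          have : x k - c k = 0 := hzero
          have h2 : ∀ a b : ZMod 2, a - b = 0 → b = a := by decide
          exact h2 _ _ this
        simpa [Pi.single_apply, hk] using this
  · rintro (rfl | ⟨j, rfl⟩)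
    · simp
    · have hsub : (Finset.univ.filter fun k =>
          x k ≠ ((x + Pi.single j 1 : Fin n → ZMod 2)) k) ⊆ {j} := by
        intro k hk
        simp only [Finset.mem_filter, Finset.mem_univ, true_and, Pi.add_apply] at hk
        simp only [Finset.mem_singleton]
        by_contra hkj
        exact hk (by simp [Pi.single_apply, hkj])
      have h2 := Finset.card_le_card hsub
      simpa [hammingDist] using h2

end S19

theorem stmt_19 (m n : ℕ) (hm : 1 ≤ m) (hn : n = 2 ^ m - 1) :
    ∃ C : Finset (Fin n → ZMod 2),
      C.card = 2 ^ n / (n + 1) ∧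
      ∀ x : Fin n → ZMod 2, ∃! c : Fin n → ZMod 2, c ∈ C ∧ hammingDist x c ≤ 1 := by
  classical
  refine ⟨S19.C m n, ?_, ?_⟩
  · rw [S19.card_C m n hn]
    have hmn : m ≤ n := by
      have := Nat.lt_two_pow_self (n := m)
      omega
    have hn1 : n + 1 = 2 ^ m := by
      have : 1 ≤ 2 ^ m := Nat.one_le_two_pow
      omega
    rw [hn1, Nat.pow_div hmn two_pos]
  · intro x
    by_cases hx : S19.s m n x = 0
    · refine ⟨x, ⟨(S19.mem_C m n x).mpr hx, by simp⟩, ?_⟩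
      rintro c ⟨hcC, hcd⟩
      rcases (S19.dist_le_one_iff x c).mp hcd with rfl | ⟨j, rfl⟩
      · rfl
      · exfalso
        have hc := (S19.mem_C m n _).mp hcC
        rw [map_add, hx, S19.s_single, zero_add] at hc
        exact S19.e_ne_zero m n hn j hc
    · obtain ⟨i, hi, hiu⟩ := S19.e_existsUnique m n hn (S19.s m n x) hx
      refine ⟨x + Pi.single i 1, ⟨?_, ?_⟩, ?_⟩
      · rw [S19.mem_C, map_add, S19.s_single, hi]
        have h2 : ∀ a : ZMod 2, a + a = 0 := by decide
        funext k
        exact h2 _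
      · exact (S19.dist_le_one_iff x _).mpr (Or.inr ⟨i, rfl⟩)
      · rintro c ⟨hcC, hcd⟩
        rcases (S19.dist_le_one_iff x c).mp hcd with rfl | ⟨j, rfl⟩
        · exact absurd ((S19.mem_C m n _).mp hcC) hx
        · have hc := (S19.mem_C m n _).mp hcC
          rw [map_add, S19.s_single] at hc
          have hej : S19.e m n j = S19.s m n x := by
            have h2 : ∀ a b : ZMod 2, a + b = 0 → b = a := by decide
            funext k
            exact h2 _ _ (congrFun hc k)
          rw [hiu j hej]
end
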